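/- Let p be a prime with p ≡ 1 (mod 3), let d ∈ F_p be a nonzero square, and let α ∈ F_p satisfy α² = −3d. Let χ : F_p → ℂ be a multiplicative character of order 3 (extended by χ(0) = 0). Then the fiberwise character sum S_d = ∑_{(x,y) ∈ F_p × F_p with y² = x³ − 27d} {x}·χ(y − 3α) is a rational integer divisible by p; that is, there exists m ∈ ℤ with S_d = p·m. -/

import Mathlib

open Finset

noncomputable def fsdZeta : ℂ := ⟨-1/2, Real.sqrt 3 / 2⟩

lemma fsdZeta_sq : fsdZeta ^ 2 + fsdZeta + 1 = 0 := by
  have hs : (Real.sqrt 3 : ℂ) ^ 2 = 3 := by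
    norm_cast
    exact Real.sq_sqrt (by norm_num)
  have hz : fsdZeta = -1/2 + (Real.sqrt 3 / 2 : ℝ) * Complex.I := by
    apply Complex.ext <;> simp [fsdZeta]
  rw [hz]
  push_cast
  linear_combination (Complex.I^2/4) * hs + ((3:ℂ)/4) * Complex.I_sq

lemma fsdZeta_im : fsdZeta.im = Real.sqrt 3 / 2 := rfl

lemma fsd_cube_classify (z : ℂ) (h3 : z ^ 3 = 1) (h1 : z ≠ 1) :
    z = fsdZeta ∨ z = -1 - fsdZeta := by
  have hq : z ^ 2 + z + 1 = 0 := by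
    have : (z - 1) * (z ^ 2 + z + 1) = 0 := by linear_combination h3
    rcases mul_eq_zero.mp this with h | h
    · exact absurd (sub_eq_zero.mp h) h1
    · exact h
  have : (z - fsdZeta) * (z - (-1 - fsdZeta)) = 0 := by linear_combination hq - fsdZeta_sq
  rcases mul_eq_zero.mp this with h | h
  · exact Or.inl (sub_eq_zero.mp h)
  · exact Or.inr (sub_eq_zero.mp h)

lemma fsd_conj_of_cube (z : ℂ) (h : z ^ 3 = 1) : (starRingEnd ℂ) z = z ^ 2 := by
  have hz0 : z ≠ 0 := by rintro rfl; simp at h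
  have habs : ‖z‖ = 1 := by
    have h1 : ‖z‖ ^ 3 = 1 := by
      rw [← norm_pow, h, norm_one]
    nlinarith [norm_nonneg z, sq_nonneg (‖z‖ - 1), sq_nonneg (‖z‖ + 1)]
  have hinv : z⁻¹ = (starRingEnd ℂ) z := Complex.inv_eq_conj habs
  rw [← hinv]
  field_simp
  linear_combination -h

lemma fsd_exists_omega (p : ℕ) [Fact p.Prime] (hp3 : p % 3 = 1) :
    ∃ ω : ZMod p, ω ^ 3 = 1 ∧ ω ≠ 1 := by
  have hdvd : 3 ∣ Fintype.card (ZMod p)ˣ := by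
    rw [ZMod.card_units_eq_totient, Nat.totient_prime (Fact.out : p.Prime)]
    omega
  haveI : Fact (Nat.Prime 3) := ⟨by norm_num⟩
  obtain ⟨u, hu⟩ := exists_prime_orderOf_dvd_card 3 hdvd
  refine ⟨(u : ZMod p), ?_, ?_⟩
  · have h1 : u ^ 3 = 1 := by rw [← hu]; exact pow_orderOf_eq_one u
    have := congrArg (Units.val) h1
    simpa using this
  · intro h
    have : u = 1 := Units.ext h
    rw [this, orderOf_one] at hu
    norm_num at hu

lemma fsd_sum_fiber_zero (p : ℕ) [Fact p.Prime]
    (ω : ZMod p) (hω3 : ω ^ 3 = 1) (hω1 : ω ≠ 1) (c : ZMod p) :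
    ∑ x ∈ univ.filter (fun x : ZMod p => x ^ 3 = c), x = 0 := by
  set s := univ.filter (fun x : ZMod p => x ^ 3 = c) with hs
  have key : ∑ x ∈ s, ω * x = ∑ x ∈ s, x := by
    apply Finset.sum_nbij' (fun x => ω * x) (fun x => ω ^ 2 * x)
    · intro a ha
      simp only [hs, mem_filter, mem_univ, true_and] at ha ⊢
      rw [mul_pow, hω3, one_mul, ha]
    · intro a ha
      simp only [hs, mem_filter, mem_univ, true_and] at ha ⊢
      rw [mul_pow, ← pow_mul]
      norm_num
      rw [show (6:ℕ) = 3*2 by rfl, pow_mul, hω3, one_pow, one_mul, ha]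
    · intro a _
      linear_combination a * hω3
    · intro a _
      linear_combination a * hω3
    · intro a _; rfl
  rw [← Finset.mul_sum] at key
  have : (ω - 1) * ∑ x ∈ s, x = 0 := by rw [sub_mul, one_mul, key, sub_self]
  rcases mul_eq_zero.mp this with h | h
  · exact absurd (sub_eq_zero.mp h) hω1
  · exact h

lemma fsd_sum_val_fiber (p : ℕ) [Fact p.Prime]
    (ω : ZMod p) (hω3 : ω ^ 3 = 1) (hω1 : ω ≠ 1) (c : ZMod p) :
    ∃ k : ℤ, ∑ x ∈ univ.filter (fun x : ZMod p => x ^ 3 = c), (x.val : ℤ) = p * k := by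
  have h0 := fsd_sum_fiber_zero p ω hω3 hω1 c
  have : ((∑ x ∈ univ.filter (fun x : ZMod p => x ^ 3 = c), (x.val : ℤ) : ℤ) : ZMod p) = 0 := by
    push_cast
    simpa [ZMod.natCast_val, ZMod.cast_id] using h0
  exact (ZMod.intCast_zmod_eq_zero_iff_dvd _ p).mp this

/-- Let `p ≡ 1 (mod 3)` be prime, `d` a nonzero square in `F_p`, `α² = -3d`,
and `χ` a multiplicative character of order 3 on `F_p` (valued in `ℂ`,
extended by `χ 0 = 0`). Then the fiberwise character sum over the affine
points of `y² = x³ - 27d` is a rational integer divisible by `p`. -/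
theorem fiber_sum_divisible_by_p
    (p : ℕ) [Fact p.Prime] (hp3 : p % 3 = 1)
    (d : ZMod p) (hd : d ≠ 0) (hdsq : IsSquare d)
    (α : ZMod p) (hα : α ^ 2 = -3 * d)
    (χ : MulChar (ZMod p) ℂ) (hχ : orderOf χ = 3) :
    ∃ m : ℤ,
      (∑ P ∈ univ.filter
          (fun P : ZMod p × ZMod p => P.2 ^ 2 = P.1 ^ 3 - 27 * d),
        (P.1.val : ℂ) * χ (P.2 - 3 * α))
        = (p : ℂ) * (m : ℂ) := by
  classical
  set S : ℂ := ∑ P ∈ univ.filter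
      (fun P : ZMod p × ZMod p => P.2 ^ 2 = P.1 ^ 3 - 27 * d),
    (P.1.val : ℂ) * χ (P.2 - 3 * α) with hS
  -- basic character facts
  have hχ3 : ∀ v : ZMod p, v ≠ 0 → χ v ^ 3 = 1 := by
    intro v hv
    have h1 : χ ^ 3 = 1 := by rw [← hχ]; exact pow_orderOf_eq_one χ
    rw [← MulChar.pow_apply' χ (by norm_num : (3:ℕ) ≠ 0) v, h1,
      MulChar.one_apply (Ne.isUnit hv)]
  have hχneg1 : χ (-1) = 1 := by
    have hne : (-1 : ZMod p) ≠ 0 := by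
      intro h
      have : (1 : ZMod p) = 0 := by linear_combination -h
      exact one_ne_zero this
    have h3 : χ (-1) ^ 3 = 1 := hχ3 (-1) hne
    have h2 : χ (-1) ^ 2 = 1 := by
      have : χ (-1) * χ (-1) = χ ((-1) * (-1)) := (map_mul χ _ _).symm
      rw [show ((-1 : ZMod p) * (-1)) = 1 by ring, MulChar.map_one] at this
      rw [pow_two, this]
    linear_combination h3 - χ (-1) * h2
  -- pointwise conjugation identity on the curve
  have hpoint : ∀ P ∈ univ.filter
      (fun P : ZMod p × ZMod p => P.2 ^ 2 = P.1 ^ 3 - 27 * d),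
      (P.1.val : ℂ) * (starRingEnd ℂ) (χ (P.2 - 3 * α))
        = (P.1.val : ℂ) * χ (-P.2 - 3 * α) := by
    rintro ⟨x, y⟩ hP
    simp only [mem_filter, mem_univ, true_and] at hP
    by_cases hx : x = 0
    · subst hx; simp [ZMod.val_zero]
    · have hprod : (y - 3*α) * (y + 3*α) = x^3 := by linear_combination hP - 9 * hα
      have hx3 : x^3 ≠ 0 := pow_ne_zero 3 hx
      have h1 : y - 3*α ≠ 0 := fun h => hx3 (by rw [← hprod, h, zero_mul])
      have h2 : y + 3*α ≠ 0 := fun h => hx3 (by rw [← hprod, h, mul_zero])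
      have hmul : χ (y - 3*α) * χ (y + 3*α) = 1 := by
        rw [← map_mul, hprod, map_pow]
        exact hχ3 x hx
      congr 1
      have hz3 : χ (y - 3*α) ^ 3 = 1 := hχ3 _ h1
      rw [fsd_conj_of_cube _ hz3]
      have hneg : χ (-y - 3*α) = χ (-1) * χ (y + 3*α) := by
        rw [← map_mul]; congr 1; ring
      rw [hneg, hχneg1, one_mul]
      calc χ (y - 3*α) ^ 2 = χ (y - 3*α) ^ 2 * (χ (y - 3*α) * χ (y + 3*α)) := by
            rw [hmul, mul_one]
        _ = χ (y - 3*α) ^ 3 * χ (y + 3*α) := by ring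
        _ = χ (y + 3*α) := by rw [hz3, one_mul]
  -- S is fixed by conjugation
  have hconj : (starRingEnd ℂ) S = S := by
    rw [hS, map_sum]
    calc ∑ P ∈ univ.filter
          (fun P : ZMod p × ZMod p => P.2 ^ 2 = P.1 ^ 3 - 27 * d),
          (starRingEnd ℂ) ((P.1.val : ℂ) * χ (P.2 - 3 * α))
        = ∑ P ∈ univ.filter
          (fun P : ZMod p × ZMod p => P.2 ^ 2 = P.1 ^ 3 - 27 * d),
          (P.1.val : ℂ) * χ (-P.2 - 3 * α) := by
          refine Finset.sum_congr rfl fun P hP => ?_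
          rw [map_mul, map_natCast]
          exact hpoint P hP
      _ = ∑ P ∈ univ.filter
          (fun P : ZMod p × ZMod p => P.2 ^ 2 = P.1 ^ 3 - 27 * d),
          (P.1.val : ℂ) * χ (P.2 - 3 * α) := by
          apply Finset.sum_nbij' (fun P : ZMod p × ZMod p => (P.1, -P.2))
            (fun P : ZMod p × ZMod p => (P.1, -P.2))
          · rintro ⟨x, y⟩ h
            simp only [mem_filter, mem_univ, true_and] at h ⊢
            rw [← h]; ring
          · rintro ⟨x, y⟩ h
            simp only [mem_filter, mem_univ, true_and] at h ⊢
            rw [← h]; ring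
          · rintro ⟨x, y⟩ _; simp
          · rintro ⟨x, y⟩ _; simp
          · rintro ⟨x, y⟩ _
            rfl
  -- the fiber-counting integers
  obtain ⟨ω, hω3, hω1⟩ := fsd_exists_omega p hp3
  choose k hk using fun c => fsd_sum_val_fiber p ω hω3 hω1 c
  have hkC : ∀ c : ZMod p,
      ∑ x ∈ univ.filter (fun x : ZMod p => x ^ 3 = c), (x.val : ℂ)
        = (p : ℂ) * (k c : ℂ) := by
    intro c
    have := hk c
    have h2 : ((∑ x ∈ univ.filter (fun x : ZMod p => x ^ 3 = c), (x.val : ℤ) : ℤ) : ℂ)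
        = ((p * k c : ℤ) : ℂ) := by exact_mod_cast congrArg (fun n : ℤ => (n : ℂ)) this
    push_cast at h2
    convert h2 using 2
  -- decompose character values over ℤ[ζ]
  have hdec : ∀ v : ZMod p, ∃ ab : ℤ × ℤ,
      χ v = (ab.1 : ℂ) + (ab.2 : ℂ) * fsdZeta := by
    intro v
    by_cases hv : v = 0
    · refine ⟨(0, 0), ?_⟩
      rw [hv, MulChar.map_nonunit χ (by simp)]
      simp
    · have h3 := hχ3 v hv
      by_cases h1 : χ v = 1
      · exact ⟨(1, 0), by rw [h1]; simp⟩
      · rcases fsd_cube_classify (χ v) h3 h1 with h | h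
        · exact ⟨(0, 1), by rw [h]; simp⟩
        · exact ⟨(-1, -1), by rw [h]; push_cast; ring⟩
  choose ab hab using hdec
  -- rewrite S as an iterated sum
  have hstep1 : S = ∑ y : ZMod p,
      (∑ x ∈ univ.filter (fun x : ZMod p => x ^ 3 = y ^ 2 + 27 * d), (x.val : ℂ))
        * χ (y - 3 * α) := by
    rw [hS, Finset.sum_filter, Fintype.sum_prod_type, Finset.sum_comm]
    refine Finset.sum_congr rfl fun y _ => ?_
    rw [Finset.sum_filter, Finset.sum_mul]
    refine Finset.sum_congr rfl fun x _ => ?_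
    rw [ite_mul, zero_mul]
    refine if_congr ?_ rfl rfl
    constructor
    · intro h; linear_combination -h
    · intro h; linear_combination -h
  -- the main algebraic identity
  set A : ℤ := ∑ y : ZMod p, k (y ^ 2 + 27 * d) * (ab (y - 3 * α)).1 with hA
  set B : ℤ := ∑ y : ZMod p, k (y ^ 2 + 27 * d) * (ab (y - 3 * α)).2 with hB
  have hmain : S = (p : ℂ) * ((A : ℂ) + (B : ℂ) * fsdZeta) := by
    rw [hstep1]
    calc ∑ y : ZMod p,
        (∑ x ∈ univ.filter (fun x : ZMod p => x ^ 3 = y ^ 2 + 27 * d), (x.val : ℂ))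
          * χ (y - 3 * α)
        = ∑ y : ZMod p, (p : ℂ) *
            (((k (y ^ 2 + 27 * d) * (ab (y - 3 * α)).1 : ℤ) : ℂ)
              + ((k (y ^ 2 + 27 * d) * (ab (y - 3 * α)).2 : ℤ) : ℂ) * fsdZeta) := by
          refine Finset.sum_congr rfl fun y _ => ?_
          rw [hkC, hab]
          push_cast
          ring
      _ = (p : ℂ) * ((A : ℂ) + (B : ℂ) * fsdZeta) := by
          rw [← Finset.mul_sum]
          congr 1
          rw [Finset.sum_add_distrib, ← Finset.sum_mul, hA, hB]
          push_cast
          ring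
  -- imaginary part forces B = 0
  have him : S.im = 0 := Complex.conj_eq_iff_im.mp hconj
  have himS : S.im = (p : ℝ) * ((B : ℝ) * (Real.sqrt 3 / 2)) := by
    rw [hmain]
    simp [Complex.mul_im, Complex.add_im, Complex.add_re, Complex.mul_re,
      fsdZeta_im]
  have hB0 : B = 0 := by
    rw [him] at himS
    have hp0 : (p : ℝ) ≠ 0 := by
      exact_mod_cast (Fact.out : p.Prime).ne_zero
    have hs3 : Real.sqrt 3 / 2 ≠ 0 := by
      have := Real.sqrt_pos.mpr (by norm_num : (3:ℝ) > 0)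
      positivity
    have : (B : ℝ) = 0 := by
      rcases mul_eq_zero.mp himS.symm with h | h
      · exact absurd h hp0
      · rcases mul_eq_zero.mp h with h' | h'
        · exact h'
        · exact absurd h' hs3
    exact_mod_cast this
  refine ⟨A, ?_⟩
  rw [hmain, hB0]
  norm_num
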